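/- For all real k ≥ 2, (π²/4) · ((k+2)/(k+1)) · ((1/4)(k+1)(2k+3)(2k+4)(2k+5))^(-1/(k+2)) < π²/4, and the limit of this expression as k → +∞ is π²/4. -/

import Mathlib

open Real Filter

private lemma aux_inv_tendsto (c : ℝ) :
    Tendsto (fun k : ℝ => 1 / (k + c)) atTop (nhds 0) := by
  have h : Tendsto (fun k : ℝ => k + c) atTop atTop :=
    tendsto_atTop_add_const_right atTop c tendsto_id
  simpa [one_div, Function.comp_def] using tendsto_inv_atTop_zero.comp h

theorem stmt_3 :
    (∀ k : ℝ, 2 ≤ k →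
      (π^2/4) * ((k+2)/(k+1)) *
        ((1/4) * (k+1) * (2*k+3) * (2*k+4) * (2*k+5)) ^ (-1/(k+2)) < π^2/4) ∧
    Filter.Tendsto
      (fun k : ℝ => (π^2/4) * ((k+2)/(k+1)) *
        ((1/4) * (k+1) * (2*k+3) * (2*k+4) * (2*k+5)) ^ (-1/(k+2)))
      Filter.atTop (nhds (π^2/4)) := by
  have hpi : (0:ℝ) < π^2/4 := by positivity
  constructor
  · intro k hk
    have hk1 : (0:ℝ) < k+1 := by linarith
    have hk2 : (0:ℝ) < k+2 := by linarith
    set Q : ℝ := (1/4) * (k+1) * (2*k+3) * (2*k+4) * (2*k+5) with hQdef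
    have hQ4 : (4:ℝ) ≤ Q := by nlinarith [sq_nonneg k, sq_nonneg (k-2)]
    have hQpos : (0:ℝ) < Q := by linarith
    have hrpos : (0:ℝ) < (k+2)/(k+1) := by positivity
    -- log bound
    have hlogr : Real.log ((k+2)/(k+1)) ≤ 1/(k+1) := by
      have h := Real.log_le_sub_one_of_pos hrpos
      have : (k+2)/(k+1) - 1 = 1/(k+1) := by field_simp; norm_num
      linarith
    have hmul : (k+2) * Real.log ((k+2)/(k+1)) ≤ 4/3 := by
      have h1 : (k+2) * Real.log ((k+2)/(k+1)) ≤ (k+2) * (1/(k+1)) :=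
        mul_le_mul_of_nonneg_left hlogr (by linarith)
      have h2 : (k+2) * (1/(k+1)) ≤ 4/3 := by
        rw [mul_one_div, div_le_div_iff₀ hk1 (by norm_num : (0:ℝ) < 3)]
        linarith
      linarith
    have hexp : Real.exp (4/3) < 4 := by
      have hlog2 : (2:ℝ)/3 < Real.log 2 := by
        have := Real.log_two_gt_d9; linarith
      have hlog4 : Real.log 4 = 2 * Real.log 2 := by
        rw [show (4:ℝ) = 2^2 by norm_num, Real.log_pow]; push_cast; ring
      calc Real.exp (4/3) < Real.exp (Real.log 4) := by
            apply Real.exp_lt_exp.mpr; linarith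
        _ = 4 := Real.exp_log (by norm_num)
    have key : ((k+2)/(k+1)) ^ (k+2 : ℝ) < Q := by
      rw [Real.rpow_def_of_pos hrpos]
      calc Real.exp (Real.log ((k+2)/(k+1)) * (k+2))
          = Real.exp ((k+2) * Real.log ((k+2)/(k+1))) := by ring_nf
        _ ≤ Real.exp (4/3) := Real.exp_le_exp.mpr hmul
        _ < 4 := hexp
        _ ≤ Q := hQ4
    have h2 : (k+2)/(k+1) < Q ^ ((1:ℝ)/(k+2)) := by
      have := Real.rpow_lt_rpow (Real.rpow_nonneg hrpos.le _) key
        (by positivity : (0:ℝ) < 1/(k+2))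
      rwa [← Real.rpow_mul hrpos.le, mul_one_div, div_self (ne_of_gt hk2),
        Real.rpow_one] at this
    have hfrac : ((k+2)/(k+1)) * Q ^ (-1/(k+2)) < 1 := by
      rw [neg_div, Real.rpow_neg hQpos.le, ← div_eq_mul_inv]
      exact (div_lt_one (by positivity)).mpr h2
    calc (π^2/4) * ((k+2)/(k+1)) * Q ^ (-1/(k+2))
        = (π^2/4) * (((k+2)/(k+1)) * Q ^ (-1/(k+2))) := by ring
      _ < π^2/4 := mul_lt_of_lt_one_right hpi hfrac
  · -- the limit
    have hlogQ : Tendsto (fun k : ℝ =>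
        Real.log ((1/4) * (k+1) * (2*k+3) * (2*k+4) * (2*k+5)) / (k+2))
        atTop (nhds 0) := by
      have hub : Tendsto (fun k : ℝ => 4 * (Real.log (2*k+5) / (k+2))) atTop (nhds 0) := by
        have h1 : Tendsto (fun x : ℝ => Real.log x / x) atTop (nhds 0) :=
          Real.isLittleO_log_id_atTop.tendsto_div_nhds_zero
        have h2 : Tendsto (fun k : ℝ => (2*k+5 : ℝ)) atTop atTop := by
          apply tendsto_atTop_add_const_right
          exact (tendsto_id.const_mul_atTop (by norm_num : (0:ℝ) < 2))
        have h3 : Tendsto (fun k : ℝ => Real.log (2*k+5) / (2*k+5)) atTop (nhds 0) :=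
          h1.comp h2
        have h4 : Tendsto (fun k : ℝ => (2*k+5)/(k+2)) atTop (nhds 2) := by
          have : Tendsto (fun k : ℝ => 2 + 1/(k+2)) atTop (nhds (2 + 0)) :=
            tendsto_const_nhds.add (aux_inv_tendsto 2)
          rw [add_zero] at this
          apply this.congr'
          filter_upwards [eventually_gt_atTop (0:ℝ)] with k hk
          field_simp
          ring
        have := (h3.mul h4).const_mul 4
        norm_num at this
        apply this.congr'
        filter_upwards [eventually_gt_atTop (0:ℝ)] with k hk
        have hk2 : (k+2) ≠ 0 := by positivity
        have h25 : (2*k+5) ≠ 0 := by positivity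
        field_simp
      have hlb : Tendsto (fun _ : ℝ => (0:ℝ)) atTop (nhds 0) := tendsto_const_nhds
      apply tendsto_of_tendsto_of_tendsto_of_le_of_le' hlb hub
      · filter_upwards [eventually_ge_atTop (2:ℝ)] with k hk
        have hQ1 : (1:ℝ) ≤ (1/4) * (k+1) * (2*k+3) * (2*k+4) * (2*k+5) := by
          nlinarith [sq_nonneg k, sq_nonneg (k-2)]
        have := Real.log_nonneg hQ1
        positivity
      · filter_upwards [eventually_ge_atTop (2:ℝ)] with k hk
        have hk2 : (0:ℝ) < k+2 := by linarith
        have hQle : (1/4) * (k+1) * (2*k+3) * (2*k+4) * (2*k+5) ≤ (2*k+5)^4 := by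
          nlinarith [sq_nonneg k, sq_nonneg (k+1)]
        have hQ1 : (1:ℝ) ≤ (1/4) * (k+1) * (2*k+3) * (2*k+4) * (2*k+5) := by
          nlinarith [sq_nonneg k, sq_nonneg (k-2)]
        have hlog : Real.log ((1/4) * (k+1) * (2*k+3) * (2*k+4) * (2*k+5))
            ≤ 4 * Real.log (2*k+5) := by
          calc Real.log ((1/4) * (k+1) * (2*k+3) * (2*k+4) * (2*k+5))
              ≤ Real.log ((2*k+5)^4) := Real.log_le_log (by linarith) hQle
            _ = 4 * Real.log (2*k+5) := by rw [Real.log_pow]; push_cast; ring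
        rw [← mul_div_assoc]
        gcongr
    have hratio : Tendsto (fun k : ℝ => (k+2)/(k+1)) atTop (nhds 1) := by
      have h : Tendsto (fun k : ℝ => 1 + 1/(k+1)) atTop (nhds (1 + 0)) :=
        tendsto_const_nhds.add (aux_inv_tendsto 1)
      rw [add_zero] at h
      apply h.congr'
      filter_upwards [eventually_gt_atTop (0:ℝ)] with k hk
      field_simp
      ring
    have hexp : Tendsto (fun k : ℝ =>
        Real.exp (-(Real.log ((1/4) * (k+1) * (2*k+3) * (2*k+4) * (2*k+5)) / (k+2))))
        atTop (nhds 1) := by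
      have h0 := hlogQ.neg
      rw [neg_zero] at h0
      have h := (Real.continuous_exp.tendsto 0).comp h0
      simpa [Function.comp_def] using h
    have hfull := ((tendsto_const_nhds (x := (π^2/4 : ℝ)) (f := atTop)).mul hratio).mul hexp
    rw [mul_one, mul_one] at hfull
    apply hfull.congr'
    filter_upwards [eventually_ge_atTop (2:ℝ)] with k hk
    have hk1 : (0:ℝ) < k+1 := by linarith
    have hQpos : (0:ℝ) < (1/4) * (k+1) * (2*k+3) * (2*k+4) * (2*k+5) := by
      nlinarith [sq_nonneg k, sq_nonneg (k-2)]
    rw [Real.rpow_def_of_pos hQpos]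
    congr 1
    ring
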